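/- Let Φ be the cumulative distribution function of the standard normal distribution on ℝ and let φ(μ) = (2π)^{−1/2} e^{−μ²/2} be its density. Then sup_{μ ∈ ℝ} φ(μ)/Φ(μ) = ∞; that is, for every K > 0 there exists μ ∈ ℝ with φ(μ)/Φ(μ) > K. In particular, the probit link fails Condition L: there is no constant 𝒦 such that φ(μ)/Φ(μ) ≤ 𝒦 for all μ. -/

import Mathlib

open MeasureTheory

lemma stmt15_aux (φ Φ : ℝ → ℝ)
    (hφ : φ = fun μ => (2 * Real.pi) ^ (-(1 / 2) : ℝ) * Real.exp (-μ ^ 2 / 2))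
    (hΦ : Φ = fun μ => ∫ x in Set.Iic μ, φ x) :
    ∀ K : ℝ, 0 < K → ∃ μ : ℝ, K < φ μ / Φ μ := by
  intro K hK
  set c : ℝ := (2 * Real.pi) ^ (-(1 / 2) : ℝ) with hc
  have hcpos : 0 < c := Real.rpow_pos_of_pos (by positivity) _
  have hφpos : ∀ x, 0 < φ x := by
    intro x; rw [hφ]; positivity
  -- integrability of φ
  have hint : Integrable φ := by
    have := (integrable_exp_neg_mul_sq (by norm_num : (0:ℝ) < 1/2)).const_mul c
    refine this.congr (Filter.Eventually.of_forall fun x => ?_)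
    simp only [hφ]
    congr 1
    ring
  -- integrability of x * φ x
  have hint2 : Integrable (fun x => x * φ x) := by
    have := (integrable_mul_exp_neg_mul_sq (by norm_num : (0:ℝ) < 1/2)).const_mul c
    refine this.congr (Filter.Eventually.of_forall fun x => ?_)
    simp only [hφ]
    rw [show -(1/2:ℝ) * x ^ 2 = -x ^ 2 / 2 by ring]
    ring
  -- Φ μ > 0
  have hΦpos : ∀ μ, 0 < Φ μ := by
    intro μ
    rw [hΦ]
    rw [setIntegral_pos_iff_support_of_nonneg_ae]
    · have : Function.support φ = Set.univ := by
        ext x; simp [Function.mem_support, (hφpos x).ne']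
      rw [this, Set.univ_inter]
      simp [Real.volume_Iic]
    · exact Filter.Eventually.of_forall fun x => (hφpos x).le
    · exact hint.integrableOn
  -- FTC: ∫_{Iic μ} x φ x = -φ μ
  have hFTC : ∀ μ : ℝ, ∫ x in Set.Iic μ, x * φ x = -φ μ := by
    intro μ
    have hderiv : ∀ x ∈ Set.Iic μ, HasDerivAt (fun x => -(φ x)) (x * φ x) x := by
      intro x _
      have h1 : HasDerivAt (fun x : ℝ => -x ^ 2 / 2) (-x) x := by
        have := ((hasDerivAt_pow 2 x).neg).div_const 2
        refine this.congr_deriv ?_; push_cast; ring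
      have h2 : HasDerivAt (fun x : ℝ => Real.exp (-x ^ 2 / 2)) (Real.exp (-x ^ 2 / 2) * (-x)) x :=
        h1.exp
      have h3 := (h2.const_mul c).neg
      simp only [hφ]
      refine h3.congr_deriv ?_
      ring
    have hlim : Filter.Tendsto (fun x => -(φ x)) Filter.atBot (nhds 0) := by
      have hsq : Filter.Tendsto (fun x : ℝ => -x ^ 2 / 2) Filter.atBot Filter.atBot := by
        have h1 : Filter.Tendsto (fun x : ℝ => x ^ 2) Filter.atBot Filter.atTop := by
          have := (Filter.tendsto_pow_atTop (α := ℝ) (n := 2) (by norm_num)).comp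
            Filter.tendsto_neg_atBot_atTop
          refine this.congr fun x => ?_
          simp [Function.comp, neg_pow]
        exact (Filter.tendsto_neg_atTop_atBot.comp h1).atBot_div_const (by norm_num : (0:ℝ) < 2)
      have := (Real.tendsto_exp_atBot.comp hsq).const_mul c
      rw [mul_zero] at this
      have := this.neg
      rw [neg_zero] at this
      refine this.congr fun x => ?_
      simp [hφ, Function.comp]
    have := integral_Iic_of_hasDerivAt_of_tendsto' hderiv hint2.integrableOn hlim
    rw [this, sub_zero]
  -- Mills bound: for μ < 0, Φ μ ≤ φ μ / (-μ)
  have hMills : ∀ μ : ℝ, μ < 0 → Φ μ ≤ φ μ / (-μ) := by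
    intro μ hμ
    have hcomp : ∫ x in Set.Iic μ, φ x ≤ ∫ x in Set.Iic μ, (x / μ) * φ x := by
      refine setIntegral_mono_on hint.integrableOn ?_ measurableSet_Iic ?_
      · have : (fun x => (x / μ) * φ x) = fun x => μ⁻¹ * (x * φ x) := by
          funext x; field_simp
        rw [this]
        exact (hint2.const_mul _).integrableOn
      · intro x hx
        have hx' : x ≤ μ := hx
        have h1 : (1 : ℝ) ≤ x / μ := by
          rw [le_div_iff_of_neg hμ, one_mul]; exact hx'
        nlinarith [hφpos x]
    have heq : ∫ x in Set.Iic μ, (x / μ) * φ x = φ μ / (-μ) := by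
      have : (fun x => (x / μ) * φ x) = fun x => μ⁻¹ * (x * φ x) := by
        funext x; field_simp
      rw [this, integral_const_mul, hFTC]
      ring
    rw [hΦ]
    calc ∫ x in Set.Iic μ, φ x ≤ ∫ x in Set.Iic μ, (x / μ) * φ x := hcomp
      _ = φ μ / (-μ) := heq
  -- conclude
  refine ⟨-(K + 1), ?_⟩
  have hμ : (-(K + 1) : ℝ) < 0 := by linarith
  have h1 := hMills _ hμ
  rw [neg_neg] at h1
  have h2 := hΦpos (-(K + 1))
  have h3 := hφpos (-(K + 1))
  rw [lt_div_iff₀ h2]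
  rw [div_eq_inv_mul, le_inv_mul_iff₀ (by linarith : (0:ℝ) < K + 1)] at h1
  nlinarith

/-- **The probit link fails Condition L.**
With `Φ` the standard normal cdf and `φ(μ) = (2π)^{-1/2} e^{-μ²/2}` its density, the ratio
`φ(μ)/Φ(μ)` is unbounded: for every `K > 0` there is `μ` with `φ(μ)/Φ(μ) > K`; in particular
there is no constant `𝒦` with `φ(μ)/Φ(μ) ≤ 𝒦` for all `μ`. -/
theorem stmt15 (φ Φ : ℝ → ℝ)
    (hφ : φ = fun μ => (2 * Real.pi) ^ (-(1 / 2) : ℝ) * Real.exp (-μ ^ 2 / 2))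
    (hΦ : Φ = fun μ => ∫ x in Set.Iic μ, φ x) :
    (∀ K : ℝ, 0 < K → ∃ μ : ℝ, K < φ μ / Φ μ) ∧
    ¬ ∃ 𝒦 : ℝ, ∀ μ : ℝ, φ μ / Φ μ ≤ 𝒦 := by
  have main := stmt15_aux φ Φ hφ hΦ
  refine ⟨main, ?_⟩
  rintro ⟨𝒦, h𝒦⟩
  obtain ⟨μ, hμ⟩ := main (max 𝒦 1) (lt_of_lt_of_le one_pos (le_max_right _ _))
  exact absurd (h𝒦 μ) (not_le.mpr (lt_of_le_of_lt (le_max_left _ _) hμ))
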